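/- Let P(z) ∈ 𝔽[z]^{m×n} have grade k and v(z) be an ansatz polynomial of grade k-1. Let r(z) = n(z)/d(z) be a Möbius function with n(z) = αz+β, d(z) = γz+δ coprime linear polynomials. Set Q(z) = d(z)^k P(n(z)/d(z)) and u(z) = d(z)^{k-1} v(n(z)/d(z)). Let L(z) = DL(P,v) and M(z) = DL(Q,u), and let B ∈ 𝔽^{k×k} be the invertible matrix with B·(z^{k-1},…,z,1)ᵀ = (n(z)^{k-1}, n(z)^{k-2}d(z), …, d(z)^{k-1})ᵀ. Then (Bᵀ ⊗ I_m) · d(z)·L(n(z)/d(z)) · (B ⊗ I_n) = M(z). -/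

import Mathlib

open Polynomial Matrix

noncomputable section

/-- The `DL(P,v)` pencil, characterized via the Lerer–Tismenetsky Bézoutian identity
`(x - y) · F_L(x,y,z) = P(y)(x-z)v(x) - P(x)(y-z)v(y)`, where
`F_L(x,y,z) = ∑_{a,b} y^{k-1-a} x^{k-1-b} L_{(a,·),(b,·)}(z)` is the image of the
`k × k` block matrix `L` under the block-to-bivariate-polynomial bijection.
Variables: `X 0 = x`, `X 1 = y`, `X 2 = z`. -/
def IsDL {F : Type*} [Field F] (k : ℕ) {m n : ℕ}
    (P : Matrix (Fin m) (Fin n) (Polynomial F)) (v : Polynomial F)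
    (L : Matrix (Fin k × Fin m) (Fin k × Fin n) (Polynomial F)) : Prop :=
  ∀ (i : Fin m) (j : Fin n),
    (MvPolynomial.X 0 - MvPolynomial.X 1) *
      ∑ a : Fin k, ∑ b : Fin k,
        (MvPolynomial.X 1 : MvPolynomial (Fin 3) F) ^ (k - 1 - (a : ℕ)) *
          MvPolynomial.X 0 ^ (k - 1 - (b : ℕ)) *
          Polynomial.aeval (MvPolynomial.X 2) (L (a, i) (b, j)) =
    Polynomial.aeval (MvPolynomial.X 1) (P i j) *
        (MvPolynomial.X 0 - MvPolynomial.X 2) *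
        Polynomial.aeval (MvPolynomial.X 0) v -
      Polynomial.aeval (MvPolynomial.X 0) (P i j) *
        (MvPolynomial.X 1 - MvPolynomial.X 2) *
        Polynomial.aeval (MvPolynomial.X 1) v


/-- The Möbius transform of grade `g` of a polynomial `p` induced by
`r(z) = (α z + β)/(γ z + δ)`: `M_{g,r}(p)(z) = (γ z + δ)^g · p((α z + β)/(γ z + δ))`. -/
def mobius {F : Type*} [Field F] (α β γ δ : F) (g : ℕ) (p : Polynomial F) : Polynomial F :=
  ∑ t ∈ Finset.range (g + 1),
    C (p.coeff t) * (C α * X + C β) ^ t * (C γ * X + C δ) ^ (g - t)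

section Helpers
variable {F K : Type*} [Field F] [Field K] (φ : F →+* K)

lemma eval₂_mobius (α β γ δ : F) (g : ℕ) (p : Polynomial F) (hp : p.natDegree ≤ g)
    (t : K) (ht : φ γ * t + φ δ ≠ 0) :
    Polynomial.eval₂ φ t (mobius α β γ δ g p)
      = (φ γ * t + φ δ) ^ g *
        Polynomial.eval₂ φ ((φ α * t + φ β) / (φ γ * t + φ δ)) p := by
  rw [Polynomial.eval₂_eq_sum_range' φ (lt_of_le_of_lt hp (Nat.lt_succ_self g)), mobius,
    Polynomial.eval₂_finset_sum, Finset.mul_sum]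
  refine Finset.sum_congr rfl fun i hi => ?_
  have hi' : i ≤ g := Nat.lt_succ_iff.mp (Finset.mem_range.mp hi)
  simp only [eval₂_mul, eval₂_pow, eval₂_add, eval₂_C, eval₂_X]
  rw [div_pow]
  have hdg : (φ γ * t + φ δ) ^ g = (φ γ * t + φ δ) ^ (g - i) * (φ γ * t + φ δ) ^ i := by
    rw [← pow_add]; congr 1; omega
  rw [hdg]
  rw [div_eq_mul_inv]
  have hinv := mul_inv_cancel₀ (pow_ne_zero i ht)
  linear_combination (-(φ (p.coeff i) * (φ α * t + φ β) ^ i * (φ γ * t + φ δ) ^ (g - i))) * hinv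

lemma cross_diff (α β γ δ : F) (s t : K) :
    (φ α * s + φ β) * (φ γ * t + φ δ) - (φ α * t + φ β) * (φ γ * s + φ δ)
      = φ (α * δ - β * γ) * (s - t) := by
  simp only [_root_.map_sub, _root_.map_mul]
  ring

lemma pow_split (i k : ℕ) (hik : i < k) (nt dt : K) (ht : dt ≠ 0) :
    (nt / dt) ^ (k - 1 - i) * dt ^ (k - 1) = nt ^ (k - 1 - i) * dt ^ i := by
  have hdg : dt ^ (k - 1) = dt ^ (k - 1 - i) * dt ^ i := by
    rw [← pow_add]; congr 1; omega
  rw [div_pow, hdg]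
  field_simp

lemma diff_mul (α β γ δ : F) (s t : K) (hs : φ γ * s + φ δ ≠ 0) (ht : φ γ * t + φ δ ≠ 0) :
    ((φ α * s + φ β) / (φ γ * s + φ δ) - (φ α * t + φ β) / (φ γ * t + φ δ)) *
      ((φ γ * s + φ δ) * (φ γ * t + φ δ)) = φ (α * δ - β * γ) * (s - t) := by
  rw [div_sub_div _ _ hs ht, div_mul_cancel₀ _ (mul_ne_zero hs ht)]
  rw [show (φ α * s + φ β) * (φ γ * t + φ δ) - (φ γ * s + φ δ) * (φ α * t + φ β)
      = (φ α * s + φ β) * (φ γ * t + φ δ) - (φ α * t + φ β) * (φ γ * s + φ δ) by ring]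
  exact cross_diff φ α β γ δ s t

lemma sum_reorder {M : Type*} [AddCommMonoid M] {k : ℕ}
    (f : Fin k → Fin k → Fin k → Fin k → M) :
    ∑ a : Fin k, ∑ b : Fin k, ∑ c : Fin k, ∑ d : Fin k, f a b c d
      = ∑ c : Fin k, ∑ d : Fin k, ∑ a : Fin k, ∑ b : Fin k, f a b c d := by
  have h1 : ∀ (g : Fin k → Fin k → M),
      ∑ p : Fin k, ∑ q : Fin k, g p q = ∑ q : Fin k, ∑ p : Fin k, g p q :=
    fun g => Finset.sum_comm
  calc ∑ a : Fin k, ∑ b : Fin k, ∑ c : Fin k, ∑ d : Fin k, f a b c d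
      = ∑ a : Fin k, ∑ c : Fin k, ∑ b : Fin k, ∑ d : Fin k, f a b c d :=
        Finset.sum_congr rfl fun a _ => h1 _
    _ = ∑ c : Fin k, ∑ a : Fin k, ∑ b : Fin k, ∑ d : Fin k, f a b c d := h1 _
    _ = ∑ c : Fin k, ∑ a : Fin k, ∑ d : Fin k, ∑ b : Fin k, f a b c d :=
        Finset.sum_congr rfl fun c _ => Finset.sum_congr rfl fun a _ => h1 _
    _ = ∑ c : Fin k, ∑ d : Fin k, ∑ a : Fin k, ∑ b : Fin k, f a b c d :=
        Finset.sum_congr rfl fun c _ => h1 _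

end Helpers

section Key
variable {F K : Type*} [Field F] [Field K] (φ : F →+* K)

lemma key_calc (k : ℕ) (hk : 0 < k) (α β γ δ : F) {m n : ℕ}
    (P : Matrix (Fin m) (Fin n) (Polynomial F)) (hP : ∀ i j, (P i j).natDegree ≤ k)
    (v : Polynomial F) (hv : v.natDegree ≤ k - 1)
    (L : Matrix (Fin k × Fin m) (Fin k × Fin n) (Polynomial F))
    (hLdeg : ∀ r c, (L r c).natDegree ≤ 1)
    (B : Matrix (Fin k) (Fin k) F)
    (hB : ∀ i : Fin k, (∑ j : Fin k, C (B i j) * (X : Polynomial F) ^ (k - 1 - (j : ℕ)))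
        = (C α * X + C β) ^ (k - 1 - (i : ℕ)) * (C γ * X + C δ) ^ (i : ℕ))
    (hcop : α * δ - β * γ ≠ 0)
    (x y z : K)
    (hdx : φ γ * x + φ δ ≠ 0) (hdy : φ γ * y + φ δ ≠ 0) (hdz : φ γ * z + φ δ ≠ 0)
    (i : Fin m) (j : Fin n)
    (hkey : ((φ α * x + φ β)/(φ γ * x + φ δ) - (φ α * y + φ β)/(φ γ * y + φ δ)) *
        ∑ a : Fin k, ∑ b : Fin k,
          ((φ α * y + φ β)/(φ γ * y + φ δ)) ^ (k - 1 - (a:ℕ)) *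
          ((φ α * x + φ β)/(φ γ * x + φ δ)) ^ (k - 1 - (b:ℕ)) *
          Polynomial.eval₂ φ ((φ α * z + φ β)/(φ γ * z + φ δ)) (L (a,i) (b,j))
      = Polynomial.eval₂ φ ((φ α * y + φ β)/(φ γ * y + φ δ)) (P i j) *
          ((φ α * x + φ β)/(φ γ * x + φ δ) - (φ α * z + φ β)/(φ γ * z + φ δ)) *
          Polynomial.eval₂ φ ((φ α * x + φ β)/(φ γ * x + φ δ)) v -
        Polynomial.eval₂ φ ((φ α * x + φ β)/(φ γ * x + φ δ)) (P i j) *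
          ((φ α * y + φ β)/(φ γ * y + φ δ) - (φ α * z + φ β)/(φ γ * z + φ δ)) *
          Polynomial.eval₂ φ ((φ α * y + φ β)/(φ γ * y + φ δ)) v) :
    (x - y) * ∑ a' : Fin k, ∑ b' : Fin k, y ^ (k - 1 - (a':ℕ)) * x ^ (k - 1 - (b':ℕ)) *
        ∑ a : Fin k, ∑ b : Fin k,
          φ (B a a') * φ (B b b') * Polynomial.eval₂ φ z (mobius α β γ δ 1 (L (a, i) (b, j)))
      = Polynomial.eval₂ φ y (mobius α β γ δ k (P i j)) * (x - z) *
          Polynomial.eval₂ φ x (mobius α β γ δ (k-1) v) -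
        Polynomial.eval₂ φ x (mobius α β γ δ k (P i j)) * (y - z) *
          Polynomial.eval₂ φ y (mobius α β γ δ (k-1) v) := by
  set nx := φ α * x + φ β with hnx
  set dx := φ γ * x + φ δ with hdx'
  set ny := φ α * y + φ β with hny
  set dy := φ γ * y + φ δ with hdy'
  set nz := φ α * z + φ β with hnz
  set dz := φ γ * z + φ δ with hdz'
  set e := φ (α * δ - β * γ) with he'
  have he : e ≠ 0 := fun h => hcop (RingHom.injective φ (by rw [map_zero]; exact h))
  -- evaluated basis identity
  have hBt : ∀ (t : K) (i : Fin k),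
      (φ α * t + φ β) ^ (k - 1 - (i:ℕ)) * (φ γ * t + φ δ) ^ (i:ℕ)
        = ∑ j : Fin k, φ (B i j) * t ^ (k - 1 - (j:ℕ)) := by
    intro t i
    have h := congrArg (Polynomial.eval₂ φ t) (hB i)
    rw [Polynomial.eval₂_finset_sum] at h
    simp only [eval₂_mul, eval₂_pow, eval₂_add, eval₂_C, eval₂_X] at h
    exact h.symm
  -- the inner sum transform
  have hS : (∑ a : Fin k, ∑ b : Fin k,
        (ny/dy) ^ (k - 1 - (a:ℕ)) * (nx/dx) ^ (k - 1 - (b:ℕ)) *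
          Polynomial.eval₂ φ (nz/dz) (L (a,i) (b,j)))
        * (dx ^ (k-1) * dy ^ (k-1) * dz)
      = ∑ a' : Fin k, ∑ b' : Fin k, y ^ (k - 1 - (a':ℕ)) * x ^ (k - 1 - (b':ℕ)) *
          ∑ a : Fin k, ∑ b : Fin k,
            φ (B a a') * φ (B b b') * Polynomial.eval₂ φ z (mobius α β γ δ 1 (L (a, i) (b, j))) := by
    rw [Finset.sum_mul]
    have lhs_eq : ∀ a : Fin k,
        (∑ b : Fin k, (ny/dy) ^ (k - 1 - (a:ℕ)) * (nx/dx) ^ (k - 1 - (b:ℕ)) *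
          Polynomial.eval₂ φ (nz/dz) (L (a,i) (b,j))) * (dx ^ (k-1) * dy ^ (k-1) * dz)
        = ∑ b : Fin k, ∑ a' : Fin k, ∑ b' : Fin k,
            φ (B a a') * y ^ (k - 1 - (a':ℕ)) * (φ (B b b') * x ^ (k - 1 - (b':ℕ))) *
              Polynomial.eval₂ φ z (mobius α β γ δ 1 (L (a, i) (b, j))) := by
      intro a
      rw [Finset.sum_mul]
      refine Finset.sum_congr rfl fun b _ => ?_
      have h1 : (ny/dy) ^ (k - 1 - (a:ℕ)) * (nx/dx) ^ (k - 1 - (b:ℕ)) *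
            Polynomial.eval₂ φ (nz/dz) (L (a,i) (b,j)) * (dx ^ (k-1) * dy ^ (k-1) * dz)
          = ((ny/dy) ^ (k - 1 - (a:ℕ)) * dy ^ (k-1)) * ((nx/dx) ^ (k - 1 - (b:ℕ)) * dx ^ (k-1)) *
            (dz * Polynomial.eval₂ φ (nz/dz) (L (a,i) (b,j))) := by ring
      rw [h1, pow_split (a:ℕ) k a.2 ny dy hdy, pow_split (b:ℕ) k b.2 nx dx hdx]
      have h2 : dz * Polynomial.eval₂ φ (nz/dz) (L (a,i) (b,j))
          = Polynomial.eval₂ φ z (mobius α β γ δ 1 (L (a,i) (b,j))) := by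
        rw [eval₂_mobius φ α β γ δ 1 _ (hLdeg _ _) z hdz, pow_one]
      rw [h2, hBt y a, hBt x b, Finset.sum_mul_sum, Finset.sum_mul]
      refine Finset.sum_congr rfl fun a' _ => ?_
      rw [Finset.sum_mul]
    calc (∑ a : Fin k, (∑ b : Fin k, (ny/dy) ^ (k - 1 - (a:ℕ)) * (nx/dx) ^ (k - 1 - (b:ℕ)) *
            Polynomial.eval₂ φ (nz/dz) (L (a,i) (b,j))) * (dx ^ (k-1) * dy ^ (k-1) * dz))
        = ∑ a : Fin k, ∑ b : Fin k, ∑ a' : Fin k, ∑ b' : Fin k,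
            φ (B a a') * y ^ (k - 1 - (a':ℕ)) * (φ (B b b') * x ^ (k - 1 - (b':ℕ))) *
              Polynomial.eval₂ φ z (mobius α β γ δ 1 (L (a, i) (b, j))) :=
          Finset.sum_congr rfl fun a _ => lhs_eq a
      _ = ∑ a' : Fin k, ∑ b' : Fin k, ∑ a : Fin k, ∑ b : Fin k,
            φ (B a a') * y ^ (k - 1 - (a':ℕ)) * (φ (B b b') * x ^ (k - 1 - (b':ℕ))) *
              Polynomial.eval₂ φ z (mobius α β γ δ 1 (L (a, i) (b, j))) := sum_reorder _
      _ = _ := by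
          refine Finset.sum_congr rfl fun a' _ => Finset.sum_congr rfl fun b' _ => ?_
          rw [Finset.mul_sum]
          refine Finset.sum_congr rfl fun a _ => ?_
          rw [Finset.mul_sum]
          refine Finset.sum_congr rfl fun b _ => ?_
          ring
  -- difference identities
  have hxy : (nx/dx - ny/dy) * (dx * dy) = e * (x - y) := diff_mul φ α β γ δ x y hdx hdy
  have hxz : (nx/dx - nz/dz) * (dx * dz) = e * (x - z) := diff_mul φ α β γ δ x z hdx hdz
  have hyz : (ny/dy - nz/dz) * (dy * dz) = e * (y - z) := diff_mul φ α β γ δ y z hdy hdz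
  -- mobius evaluations
  have hQy : Polynomial.eval₂ φ y (mobius α β γ δ k (P i j))
      = dy ^ k * Polynomial.eval₂ φ (ny/dy) (P i j) := eval₂_mobius φ α β γ δ k _ (hP i j) y hdy
  have hQx : Polynomial.eval₂ φ x (mobius α β γ δ k (P i j))
      = dx ^ k * Polynomial.eval₂ φ (nx/dx) (P i j) := eval₂_mobius φ α β γ δ k _ (hP i j) x hdx
  have hux : Polynomial.eval₂ φ x (mobius α β γ δ (k-1) v)
      = dx ^ (k-1) * Polynomial.eval₂ φ (nx/dx) v := eval₂_mobius φ α β γ δ (k-1) v hv x hdx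
  have huy : Polynomial.eval₂ φ y (mobius α β γ δ (k-1) v)
      = dy ^ (k-1) * Polynomial.eval₂ φ (ny/dy) v := eval₂_mobius φ α β γ δ (k-1) v hv y hdy
  have hpow : ∀ w : K, w ^ k = w ^ (k-1) * w := by
    intro w; rw [← pow_succ]; congr 1; omega
  apply mul_left_cancel₀ he
  rw [← mul_assoc, ← hS, ← hxy]
  calc (nx/dx - ny/dy) * (dx * dy) *
        ((∑ a : Fin k, ∑ b : Fin k,
          (ny/dy) ^ (k - 1 - (a:ℕ)) * (nx/dx) ^ (k - 1 - (b:ℕ)) *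
            Polynomial.eval₂ φ (nz/dz) (L (a,i) (b,j))) * (dx ^ (k-1) * dy ^ (k-1) * dz))
      = ((nx/dx - ny/dy) * ∑ a : Fin k, ∑ b : Fin k,
          (ny/dy) ^ (k - 1 - (a:ℕ)) * (nx/dx) ^ (k - 1 - (b:ℕ)) *
            Polynomial.eval₂ φ (nz/dz) (L (a,i) (b,j))) *
          (dx ^ (k-1) * dy ^ (k-1) * dz * (dx * dy)) := by ring
    _ = (Polynomial.eval₂ φ (ny/dy) (P i j) * (nx/dx - nz/dz) * Polynomial.eval₂ φ (nx/dx) v -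
          Polynomial.eval₂ φ (nx/dx) (P i j) * (ny/dy - nz/dz) * Polynomial.eval₂ φ (ny/dy) v) *
          (dx ^ (k-1) * dy ^ (k-1) * dz * (dx * dy)) := by rw [hkey]
    _ = e * (Polynomial.eval₂ φ y (mobius α β γ δ k (P i j)) * (x - z) *
          Polynomial.eval₂ φ x (mobius α β γ δ (k-1) v) -
        Polynomial.eval₂ φ x (mobius α β γ δ k (P i j)) * (y - z) *
          Polynomial.eval₂ φ y (mobius α β γ δ (k-1) v)) := by
        rw [hQy, hQx, hux, huy, hpow dx, hpow dy]
        linear_combination (Polynomial.eval₂ φ (ny/dy) (P i j) * Polynomial.eval₂ φ (nx/dx) v *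
            dy ^ (k-1) * dy * dx ^ (k-1)) * hxz -
          (Polynomial.eval₂ φ (nx/dx) (P i j) * Polynomial.eval₂ φ (ny/dy) v *
            dx ^ (k-1) * dx * dy ^ (k-1)) * hyz
end Key


lemma extract_coeff {A : Type*} [Semiring A] {k : ℕ} (g : Fin k → A) (a₀ : Fin k) :
    (∑ a : Fin k, C (g a) * X ^ (k - 1 - (a : ℕ))).coeff (k - 1 - (a₀ : ℕ)) = g a₀ := by
  rw [Polynomial.finset_sum_coeff, Finset.sum_eq_single a₀]
  · rw [coeff_C_mul, coeff_X_pow, if_pos rfl, mul_one]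
  · intro b _ hb
    rw [coeff_C_mul, coeff_X_pow, if_neg, mul_zero]
    intro hcontr
    have h1 := a₀.2
    have h2 := b.2
    exact hb (Fin.ext (by omega))
  · intro h; exact absurd (Finset.mem_univ a₀) h

section
variable {F : Type*} [Field F]

private noncomputable def cF : F →+* Polynomial (Polynomial (Polynomial F)) :=
  (Polynomial.C).comp ((Polynomial.C).comp Polynomial.C)

private noncomputable def Psi : MvPolynomial (Fin 3) F →+* Polynomial (Polynomial (Polynomial F)) :=
  MvPolynomial.eval₂Hom (R := F) (S₁ := Polynomial (Polynomial (Polynomial F))) (cF (F := F)) ![C X, X, C (C X)]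

lemma eval₂_CCX (f : Polynomial F) :
    Polynomial.eval₂ (cF (F := F)) (C (C (X : Polynomial F))) f = C (C f) := by
  induction f using Polynomial.induction_on' with
  | add p q hp hq => simp [hp, hq]
  | monomial n a =>
      rw [eval₂_monomial]
      rw [← Polynomial.C_mul_X_pow_eq_monomial, _root_.map_mul, _root_.map_pow, _root_.map_mul, _root_.map_pow]
      simp [cF]

lemma Psi_aeval (f : Polynomial F) :
    Psi (Polynomial.aeval (MvPolynomial.X 2 : MvPolynomial (Fin 3) F) f) = C (C f) := by
  have : Polynomial.aeval (MvPolynomial.X 2 : MvPolynomial (Fin 3) F) f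
      = Polynomial.eval₂ MvPolynomial.C (MvPolynomial.X 2) f := rfl
  rw [this, Polynomial.hom_eval₂]
  have h1 : (Psi (F := F)).comp MvPolynomial.C = cF := by
    ext a
    simp [Psi, cF]
  have h2 : Psi (F := F) (MvPolynomial.X 2) = C (C X) := by
    simp [Psi]
  rw [h1, h2, eval₂_CCX]

lemma sum_inj {k : ℕ} (f g : Fin k → Fin k → Polynomial F)
    (h : (∑ a : Fin k, ∑ b : Fin k,
        (MvPolynomial.X 1 : MvPolynomial (Fin 3) F) ^ (k - 1 - (a : ℕ)) *
          MvPolynomial.X 0 ^ (k - 1 - (b : ℕ)) *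
          Polynomial.aeval (MvPolynomial.X 2) (f a b)) =
      ∑ a : Fin k, ∑ b : Fin k,
        (MvPolynomial.X 1 : MvPolynomial (Fin 3) F) ^ (k - 1 - (a : ℕ)) *
          MvPolynomial.X 0 ^ (k - 1 - (b : ℕ)) *
          Polynomial.aeval (MvPolynomial.X 2) (g a b)) :
    ∀ a b, f a b = g a b := by
  have key : ∀ (f : Fin k → Fin k → Polynomial F),
      Psi (∑ a : Fin k, ∑ b : Fin k,
        (MvPolynomial.X 1 : MvPolynomial (Fin 3) F) ^ (k - 1 - (a : ℕ)) *
          MvPolynomial.X 0 ^ (k - 1 - (b : ℕ)) *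
          Polynomial.aeval (MvPolynomial.X 2) (f a b))
      = ∑ a : Fin k, C (∑ b : Fin k, C (f a b) * X ^ (k - 1 - (b : ℕ))) *
          X ^ (k - 1 - (a : ℕ)) := by
    intro f
    rw [_root_.map_sum]
    refine Finset.sum_congr rfl fun a _ => ?_
    rw [_root_.map_sum, _root_.map_sum, Finset.sum_mul]
    refine Finset.sum_congr rfl fun b _ => ?_
    rw [_root_.map_mul, _root_.map_mul, _root_.map_pow, _root_.map_pow, Psi_aeval]
    have h1 : Psi (F := F) (MvPolynomial.X 1) = X := by simp [Psi]
    have h0 : Psi (F := F) (MvPolynomial.X 0) = C X := by simp [Psi]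
    rw [h1, h0, _root_.map_mul, _root_.map_pow]
    ring
  have h' := congrArg Psi h
  rw [key, key] at h'
  intro a b
  have h2 := congrArg (fun p => Polynomial.coeff p (k - 1 - (a : ℕ))) h'
  rw [extract_coeff, extract_coeff] at h2
  have h3 := congrArg (fun p => Polynomial.coeff p (k - 1 - (b : ℕ))) h2
  rw [extract_coeff, extract_coeff] at h3
  exact h3

end


lemma mvhom_aeval {F : Type*} [Field F] {K : Type*} [CommSemiring K]
    (f : MvPolynomial (Fin 3) F →+* K) (t : Fin 3) (q : Polynomial F) :
    f (Polynomial.aeval (MvPolynomial.X t : MvPolynomial (Fin 3) F) q)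
      = Polynomial.eval₂ (f.comp MvPolynomial.C) (f (MvPolynomial.X t)) q := by
  rw [Polynomial.aeval_def, MvPolynomial.algebraMap_eq, Polynomial.hom_eval₂]


set_option maxHeartbeats 2000000 in
set_option synthInstance.maxHeartbeats 1000000 in
lemma transformedIsDL {F : Type*} [Field F] (k m n : ℕ)
  (P : Matrix (Fin m) (Fin n) (Polynomial F)) (hP : ∀ i j, (P i j).natDegree ≤ k)
  (v : Polynomial F) (hv : v.natDegree ≤ k - 1)
  (α β γ δ : F) (hcop : α * δ - β * γ ≠ 0)
  (L : Matrix (Fin k × Fin m) (Fin k × Fin n) (Polynomial F))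
  (hLdeg : ∀ r c, (L r c).natDegree ≤ 1)
  (hL : IsDL k P v L)
  (B : Matrix (Fin k) (Fin k) F)
  (hB : ∀ i : Fin k,
    (∑ j : Fin k, C (B i j) * (X : Polynomial F) ^ (k - 1 - (j : ℕ)))
      = (C α * X + C β) ^ (k - 1 - (i : ℕ)) * (C γ * X + C δ) ^ (i : ℕ))
  (hk : 0 < k) :
  IsDL k (Matrix.of fun i j => mobius α β γ δ k (P i j))
    (mobius α β γ δ (k - 1) v)
    (Matrix.of fun r c => ∑ a' : Fin k, ∑ b' : Fin k,
      C (B a' r.1) * C (B b' c.1) * mobius α β γ δ 1 (L (a', r.2) (b', c.2))) := by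
  intro i j
  set ι : MvPolynomial (Fin 3) F →+* FractionRing (MvPolynomial (Fin 3) F) :=
    algebraMap (MvPolynomial (Fin 3) F) (FractionRing (MvPolynomial (Fin 3) F)) with hι
  have hinj : Function.Injective ι := IsFractionRing.injective _ _
  set φ : F →+* FractionRing (MvPolynomial (Fin 3) F) := ι.comp MvPolynomial.C with hφ
  have hd : ∀ t : Fin 3, φ γ * ι (MvPolynomial.X t) + φ δ ≠ 0 := by
    intro t h
    have h' : (MvPolynomial.C γ * MvPolynomial.X t + MvPolynomial.C δ
        : MvPolynomial (Fin 3) F) = 0 := by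
      apply hinj
      rw [map_zero, _root_.map_add, _root_.map_mul]
      exact h
    have hδ0 : δ = 0 := by
      have := congrArg (MvPolynomial.coeff 0) h'
      simpa [MvPolynomial.coeff_X', MvPolynomial.coeff_C, MvPolynomial.coeff_C_mul, Finsupp.single_eq_zero, eq_comm] using this
    have hγ0 : γ = 0 := by
      have := congrArg (MvPolynomial.coeff (Finsupp.single t 1)) h'
      simpa [MvPolynomial.coeff_X', MvPolynomial.coeff_C, MvPolynomial.coeff_C_mul, Finsupp.single_eq_zero, eq_comm] using this
    apply hcop; rw [hγ0, hδ0]; ring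
  set Ψ : MvPolynomial (Fin 3) F →+* FractionRing (MvPolynomial (Fin 3) F) :=
    MvPolynomial.eval₂Hom φ (fun t => (φ α * ι (MvPolynomial.X t) + φ β) /
      (φ γ * ι (MvPolynomial.X t) + φ δ)) with hΨ
  have hΨC : Ψ.comp MvPolynomial.C = φ := RingHom.ext fun a => MvPolynomial.eval₂Hom_C _ _ _
  have hΨX : ∀ t, Ψ (MvPolynomial.X t) = (φ α * ι (MvPolynomial.X t) + φ β) /
      (φ γ * ι (MvPolynomial.X t) + φ δ) := fun t => MvPolynomial.eval₂Hom_X' _ _ _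
  have hkey := congrArg Ψ (hL i j)
  simp only [_root_.map_mul, _root_.map_sub, _root_.map_sum, _root_.map_pow, mvhom_aeval, hΨC, hΨX] at hkey
  have hmain := key_calc φ k hk α β γ δ P hP v hv L hLdeg B hB hcop
    (ι (MvPolynomial.X 0)) (ι (MvPolynomial.X 1)) (ι (MvPolynomial.X 2))
    (hd 0) (hd 1) (hd 2) i j hkey
  apply hinj
  have hιC : ι.comp MvPolynomial.C = φ := rfl
  simp only [_root_.map_mul, _root_.map_sub, _root_.map_sum, _root_.map_pow, mvhom_aeval, hιC,
    Matrix.of_apply, Polynomial.eval₂_C]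
  exact hmain


set_option maxHeartbeats 2000000 in
set_option synthInstance.maxHeartbeats 1000000 in
theorem stmt10 {F : Type*} [Field F] (k m n : ℕ)
    (P : Matrix (Fin m) (Fin n) (Polynomial F)) (hP : ∀ i j, (P i j).natDegree ≤ k)
    (v : Polynomial F) (hv : v.natDegree ≤ k - 1)
    (α β γ δ : F) (hcop : α * δ - β * γ ≠ 0)
    (L : Matrix (Fin k × Fin m) (Fin k × Fin n) (Polynomial F))
    (hLdeg : ∀ r c, (L r c).natDegree ≤ 1)
    (hL : IsDL k P v L)
    (M : Matrix (Fin k × Fin m) (Fin k × Fin n) (Polynomial F))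
    (hMdeg : ∀ r c, (M r c).natDegree ≤ 1)
    (hM : IsDL k (Matrix.of fun i j => mobius α β γ δ k (P i j))
            (mobius α β γ δ (k - 1) v) M)
    (B : Matrix (Fin k) (Fin k) F)
    (hB : ∀ i : Fin k,
      (∑ j : Fin k, C (B i j) * (X : Polynomial F) ^ (k - 1 - (j : ℕ)))
        = (C α * X + C β) ^ (k - 1 - (i : ℕ)) * (C γ * X + C δ) ^ (i : ℕ)) :
    ∀ (a : Fin k) (i : Fin m) (b : Fin k) (j : Fin n),
      (∑ a' : Fin k, ∑ b' : Fin k,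
        C (B a' a) * C (B b' b) * mobius α β γ δ 1 (L (a', i) (b', j)))
      = M (a, i) (b, j) := by
  rcases Nat.eq_zero_or_pos k with hk0 | hk
  · subst hk0; exact fun a => a.elim0
  have hxy0 : (MvPolynomial.X 0 - MvPolynomial.X 1 : MvPolynomial (Fin 3) F) ≠ 0 :=
    sub_ne_zero.mpr (MvPolynomial.X_injective.ne (by decide))
  have hDL := transformedIsDL k m n P hP v hv α β γ δ hcop L hLdeg hL B hB hk
  intro a i b j
  have h1 := hDL i j
  have h2 := hM i j
  have h3 := mul_left_cancel₀ hxy0 (h1.trans h2.symm)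
  have h4 := sum_inj
    (fun a' b' => ∑ c : Fin k, ∑ d : Fin k,
        C (B c a') * C (B d b') * mobius α β γ δ 1 (L (c, i) (d, j)))
    (fun a' b' => M (a', i) (b', j)) h3 a b
  exact h4

end
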